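/- (One-step exploratory MV value) Let a, w, x ∈ ℝ, σ > 0, λ > 0, r_f > 0. Define J(π) = E[(r_f x + r U - w)²] + λ ∫ π(u) ln π(u) du - (w-b)², where r has mean a and variance σ², U has density π independent of r. Then the minimizing π is the Gaussian N(-a(r_f x - w)/(a²+σ²), λ/(2(a²+σ²))), and the minimum value equals (σ²/(a²+σ²))(r_f x - w)² + (λ/2) ln((a²+σ²)/(πλ)) - (w-b)². -/

import Mathlib

open MeasureTheory Real

/-- Gaussian density with mean `m` and variance `s2`. -/
noncomputable def gaussPdf (m s2 u : ℝ) : ℝ :=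
  (Real.sqrt (2 * Real.pi * s2))⁻¹ * Real.exp (-(u - m) ^ 2 / (2 * s2))

/-- A probability density on ℝ. -/
def IsDensity (p : ℝ → ℝ) : Prop := (∀ u, 0 ≤ p u) ∧ (∫ u, p u) = 1

/-- One-step exploratory MV value:
`J(p) = E[(r_f x + r U - w)²] + λ ∫ p ln p - (w-b)²` with `U ~ p` independent of `r`. -/
noncomputable def oneStepJ {Ω : Type*} [MeasurableSpace Ω] (μ : Measure Ω)
    (r : Ω → ℝ) (rf lam x w b : ℝ) (p : ℝ → ℝ) : ℝ :=
  (∫ ω, ∫ u, (rf * x + r ω * u - w) ^ 2 * p u ∂volume ∂μ) +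
    lam * (∫ u, p u * Real.log (p u)) - (w - b) ^ 2

section aux
variable {m s2 : ℝ}

lemma gaussPdf_eq (hs2 : 0 < s2) (u : ℝ) :
    gaussPdf m s2 u = (Real.sqrt (2 * Real.pi * s2))⁻¹ * Real.exp (-(2*s2)⁻¹ * (u - m) ^ 2) := by
  unfold gaussPdf
  congr 1
  rw [neg_div, div_eq_inv_mul, neg_mul]

lemma gaussPdf_pos (hs2 : 0 < s2) (u : ℝ) : 0 < gaussPdf m s2 u := by
  unfold gaussPdf
  have h : 0 < 2 * Real.pi * s2 := by positivity
  positivity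

lemma gaussPdf_integrable (hs2 : 0 < s2) : Integrable (gaussPdf m s2) := by
  have hb : 0 < (2*s2)⁻¹ := by positivity
  have := ((integrable_exp_neg_mul_sq hb).comp_sub_right m).const_mul
    (Real.sqrt (2 * Real.pi * s2))⁻¹
  exact this.congr (Filter.Eventually.of_forall (fun u => (gaussPdf_eq hs2 u).symm))

lemma gaussPdf_integral (hs2 : 0 < s2) : ∫ u, gaussPdf m s2 u = 1 := by
  have hb : 0 < (2*s2)⁻¹ := by positivity
  have h2 : (0:ℝ) < 2 * Real.pi * s2 := by positivity
  calc ∫ u, gaussPdf m s2 u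
      = ∫ u, (Real.sqrt (2 * Real.pi * s2))⁻¹ * Real.exp (-(2*s2)⁻¹ * ((u - m)) ^ 2) := by
        exact integral_congr_ae (Filter.Eventually.of_forall (fun u => gaussPdf_eq hs2 u))
    _ = (Real.sqrt (2 * Real.pi * s2))⁻¹ * ∫ u, Real.exp (-(2*s2)⁻¹ * ((u - m)) ^ 2) := by
        rw [integral_const_mul]
    _ = (Real.sqrt (2 * Real.pi * s2))⁻¹ * ∫ u, Real.exp (-(2*s2)⁻¹ * u ^ 2) := by
        rw [integral_sub_right_eq_self (fun u => Real.exp (-(2*s2)⁻¹ * u ^ 2)) m]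
    _ = (Real.sqrt (2 * Real.pi * s2))⁻¹ * Real.sqrt (Real.pi / (2*s2)⁻¹) := by
        rw [integral_gaussian]
    _ = 1 := by
        rw [div_inv_eq_mul, show Real.pi * (2*s2) = 2 * Real.pi * s2 by ring,
          inv_mul_cancel₀ (Real.sqrt_ne_zero'.mpr h2)]

lemma gaussPdf_shift_sq_integrable (hs2 : 0 < s2) :
    Integrable (fun u => (u - m) ^ 2 * gaussPdf m s2 u) := by
  have hb : 0 < (2*s2)⁻¹ := by positivity
  have h0 : Integrable (fun v : ℝ => v ^ 2 * Real.exp (-(2*s2)⁻¹ * v ^ 2)) := by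
    have := integrable_rpow_mul_exp_neg_mul_sq hb (by norm_num : (-1:ℝ) < 2)
    refine this.congr (Filter.Eventually.of_forall (fun v => ?_))
    norm_num [show ((2:ℝ):ℝ) = ((2:ℕ):ℝ) by norm_num, Real.rpow_natCast]
  have := (h0.comp_sub_right m).const_mul (Real.sqrt (2 * Real.pi * s2))⁻¹
  refine this.congr (Filter.Eventually.of_forall (fun u => ?_))
  simp only [gaussPdf_eq hs2]; ring

lemma gaussPdf_shift_integrable (hs2 : 0 < s2) :
    Integrable (fun u => (u - m) * gaussPdf m s2 u) := by
  have hb : 0 < (2*s2)⁻¹ := by positivity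
  have h0 := integrable_mul_exp_neg_mul_sq hb
  have := (h0.comp_sub_right m).const_mul (Real.sqrt (2 * Real.pi * s2))⁻¹
  refine this.congr (Filter.Eventually.of_forall (fun u => ?_))
  simp only [gaussPdf_eq hs2]; ring

lemma gaussPdf_sq_integrable (hs2 : 0 < s2) :
    Integrable (fun u => u ^ 2 * gaussPdf m s2 u) := by
  have h := ((gaussPdf_shift_sq_integrable (m := m) hs2).add
      (((gaussPdf_shift_integrable (m := m) hs2).const_mul (2*m)).add
        ((gaussPdf_integrable (m := m) hs2).const_mul (m^2))))
  refine h.congr (Filter.Eventually.of_forall (fun u => ?_))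
  simp only [Pi.add_apply]; ring

lemma gaussPdf_log (hs2 : 0 < s2) (u : ℝ) :
    Real.log (gaussPdf m s2 u) =
      -(1/2) * Real.log (2 * Real.pi * s2) - (2*s2)⁻¹ * (u - m) ^ 2 := by
  have h2 : (0:ℝ) < 2 * Real.pi * s2 := by positivity
  rw [gaussPdf_eq hs2, Real.log_mul (by positivity) (Real.exp_ne_zero _),
    Real.log_inv, Real.log_exp, Real.log_sqrt h2.le]
  ring

lemma gaussPdf_entropy_integrable (hs2 : 0 < s2) :
    Integrable (fun u => gaussPdf m s2 u * Real.log (gaussPdf m s2 u)) := by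
  have h := (((gaussPdf_integrable (m := m) hs2).const_mul
      (-(1/2) * Real.log (2 * Real.pi * s2))).sub
      ((gaussPdf_shift_sq_integrable (m := m) hs2).const_mul ((2*s2)⁻¹)))
  refine h.congr (Filter.Eventually.of_forall (fun u => ?_))
  simp only [Pi.sub_apply]
  rw [gaussPdf_log hs2]; ring


lemma abs_le_one_add_sq (u : ℝ) : |u| ≤ 1 + u ^ 2 := by
  nlinarith [sq_nonneg (|u| - 1), abs_nonneg u, sq_abs u]

lemma density_mul_integrable {p : ℝ → ℝ} (hp0 : ∀ u, 0 ≤ p u) (hpint : Integrable p)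
    (h2 : Integrable (fun u => u ^ 2 * p u)) : Integrable (fun u => u * p u) := by
  refine Integrable.mono' (hpint.add h2) (aestronglyMeasurable_id.mul hpint.1)
    (Filter.Eventually.of_forall (fun u => ?_))
  have h := hp0 u
  have := abs_le_one_add_sq u
  rw [Real.norm_eq_abs, abs_mul, abs_of_nonneg h]
  simp only [Pi.add_apply]
  nlinarith [mul_le_mul_of_nonneg_right this h]

lemma plogq_integrable (hs2 : 0 < s2) {p : ℝ → ℝ}
    (hpint : Integrable p) (hp1 : Integrable (fun u => u * p u))
    (h2 : Integrable (fun u => u ^ 2 * p u)) :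
    Integrable (fun u => p u * Real.log (gaussPdf m s2 u)) := by
  have h := ((hpint.const_mul (-(1/2) * Real.log (2 * Real.pi * s2))).sub
    (((h2.sub (hp1.const_mul (2*m))).add (hpint.const_mul (m^2))).const_mul ((2*s2)⁻¹)))
  refine h.congr (Filter.Eventually.of_forall (fun u => ?_))
  simp only [Pi.sub_apply, Pi.add_apply]
  rw [gaussPdf_log hs2]; ring

lemma gibbs (hs2 : 0 < s2) {p : ℝ → ℝ} (hp : IsDensity p)
    (hent : Integrable (fun u => p u * Real.log (p u)))
    (h2 : Integrable (fun u => u ^ 2 * p u)) :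
    0 ≤ ∫ u, p u * (Real.log (p u) - Real.log (gaussPdf m s2 u)) := by
  have hpint : Integrable p := integrable_of_integral_eq_one hp.2
  have hp1 := density_mul_integrable hp.1 hpint h2
  have hplogq := plogq_integrable (m := m) hs2 hpint hp1 h2
  have hqint := gaussPdf_integrable (m := m) hs2
  have hint : Integrable (fun u => p u * (Real.log (p u) - Real.log (gaussPdf m s2 u))) :=
    (hent.sub hplogq).congr (Filter.Eventually.of_forall (fun u => by
      simp only [Pi.sub_apply]; ring))
  have hpt : ∀ u, p u - gaussPdf m s2 u ≤
      p u * (Real.log (p u) - Real.log (gaussPdf m s2 u)) := by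
    intro u
    have hq' := gaussPdf_pos (m := m) hs2 u
    rcases (hp.1 u).eq_or_lt with h | h
    · rw [← h]; simp; linarith
    · have hlog : Real.log (gaussPdf m s2 u / p u) ≤ gaussPdf m s2 u / p u - 1 :=
        Real.log_le_sub_one_of_pos (by positivity)
      have hmul : p u * Real.log (gaussPdf m s2 u / p u) ≤
          p u * (gaussPdf m s2 u / p u - 1) := mul_le_mul_of_nonneg_left hlog h.le
      rw [Real.log_div hq'.ne' h.ne'] at hmul
      have h3 : p u * (gaussPdf m s2 u / p u - 1) = gaussPdf m s2 u - p u := by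
        field_simp
      nlinarith [hmul]
  calc (0:ℝ) = ∫ u, (p u - gaussPdf m s2 u) := by
        rw [integral_sub hpint hqint, hp.2, gaussPdf_integral hs2]; ring
    _ ≤ _ := integral_mono (hpint.sub hqint) hint hpt

end aux

lemma J_formula {Ω : Type*} [MeasurableSpace Ω] (μ : Measure Ω) [IsProbabilityMeasure μ]
    (r : Ω → ℝ) (hmeas : Measurable r)
    (a σ rf lam x w bb : ℝ) (hσ : 0 < σ) (hlam : 0 < lam)
    (hr2 : Integrable (fun ω => (r ω) ^ 2) μ)
    (hra : ∫ ω, r ω ∂μ = a)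
    (hrv : ∫ ω, (r ω) ^ 2 ∂μ = a ^ 2 + σ ^ 2)
    (p : ℝ → ℝ) (hp : IsDensity p)
    (h2 : Integrable (fun u => u ^ 2 * p u))
    (hent : Integrable (fun u => p u * Real.log (p u))) :
    oneStepJ μ r rf lam x w bb p =
      (σ ^ 2 / (a ^ 2 + σ ^ 2) * (rf * x - w) ^ 2 +
        lam / 2 * Real.log ((a ^ 2 + σ ^ 2) / (Real.pi * lam)) - (w - bb) ^ 2) +
      lam * ∫ u, p u * (Real.log (p u) -
        Real.log (gaussPdf (-(a * (rf * x - w)) / (a ^ 2 + σ ^ 2))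
          (lam / (2 * (a ^ 2 + σ ^ 2))) u)) := by
  have hc : (0:ℝ) < a ^ 2 + σ ^ 2 := by positivity
  set c : ℝ := a ^ 2 + σ ^ 2 with hcdef
  set A : ℝ := rf * x - w with hAdef
  set m : ℝ := -(a * A) / c with hmdef
  set s2 : ℝ := lam / (2 * c) with hs2def
  have hs2 : 0 < s2 := by rw [hs2def]; positivity
  have hpint : Integrable p := integrable_of_integral_eq_one hp.2
  have hp1 := density_mul_integrable hp.1 hpint h2
  set I1 : ℝ := ∫ u, u * p u with hI1
  set I2 : ℝ := ∫ u, u ^ 2 * p u with hI2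
  -- inner integral
  have expand : ∀ t : ℝ, ∫ u, (rf * x + t * u - w) ^ 2 * p u =
      A ^ 2 + (2 * A * t) * I1 + t ^ 2 * I2 := by
    intro t
    have e : (fun u => (rf * x + t * u - w) ^ 2 * p u) =
        fun u => A ^ 2 * p u + (2 * A * t) * (u * p u) + t ^ 2 * (u ^ 2 * p u) := by
      funext u
      have : rf * x + t * u - w = A + t * u := by rw [hAdef]; ring
      rw [this]; ring
    have ia : Integrable (fun u => A ^ 2 * p u) := hpint.const_mul _
    have ib : Integrable (fun u => (2 * A * t) * (u * p u)) := hp1.const_mul _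
    have ic : Integrable (fun u => t ^ 2 * (u ^ 2 * p u)) := h2.const_mul _
    have iab : Integrable (fun u => A ^ 2 * p u + (2 * A * t) * (u * p u)) := ia.add ib
    rw [e, integral_add iab ic, integral_add ia ib,
      integral_const_mul, integral_const_mul, integral_const_mul, hp.2]
    ring
  -- outer integral
  have hr1 : Integrable r μ := by
    refine Integrable.mono' ((integrable_const (1:ℝ)).add hr2) hmeas.aestronglyMeasurable
      (Filter.Eventually.of_forall (fun ω => ?_))
    simp only [Pi.add_apply]
    have := abs_le_one_add_sq (r ω)
    rw [Real.norm_eq_abs]; linarith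
  have houter : ∫ ω, ∫ u, (rf * x + r ω * u - w) ^ 2 * p u ∂volume ∂μ =
      A ^ 2 + 2 * A * a * I1 + c * I2 := by
    have e : (fun ω => ∫ u, (rf * x + r ω * u - w) ^ 2 * p u) =
        fun ω => A ^ 2 + ((2 * A * I1) * r ω + I2 * (r ω) ^ 2) := by
      funext ω; rw [expand (r ω)]; ring
    have ia : Integrable (fun ω : Ω => (2 * A * I1) * r ω) μ := hr1.const_mul _
    have ib : Integrable (fun ω : Ω => I2 * (r ω) ^ 2) μ := hr2.const_mul _
    have iab : Integrable (fun ω : Ω => (2 * A * I1) * r ω + I2 * (r ω) ^ 2) μ := ia.add ib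
    rw [e, integral_add (integrable_const _) iab, integral_add ia ib,
      integral_const_mul, integral_const_mul, hra, hrv, integral_const]
    simp only [measure_univ, ENNReal.toReal_one, probReal_univ, smul_eq_mul, one_mul]
    ring
  -- entropy split
  have hplogq := plogq_integrable (m := m) hs2 hpint hp1 h2
  have hsplit : ∫ u, p u * (Real.log (p u) - Real.log (gaussPdf m s2 u)) =
      (∫ u, p u * Real.log (p u)) - ∫ u, p u * Real.log (gaussPdf m s2 u) := by
    rw [← integral_sub hent hplogq]
    exact integral_congr_ae (Filter.Eventually.of_forall (fun u => by ring))
  have hlogqval : ∫ u, p u * Real.log (gaussPdf m s2 u) =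
      -(1/2) * Real.log (2 * Real.pi * s2) - (2 * s2)⁻¹ * (I2 - 2 * m * I1 + m ^ 2) := by
    have ia : Integrable (fun u => (-(1/2) * Real.log (2 * Real.pi * s2)) * p u) :=
      hpint.const_mul _
    have ib1 : Integrable (fun u => (2 * m) * (u * p u)) := hp1.const_mul _
    have ib2 : Integrable (fun u => (u ^ 2 * p u) - (2 * m) * (u * p u)) := h2.sub ib1
    have ib3 : Integrable (fun u => m ^ 2 * p u) := hpint.const_mul _
    have ib4 : Integrable
        (fun u => ((u ^ 2 * p u) - (2 * m) * (u * p u)) + m ^ 2 * p u) := ib2.add ib3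
    have ib : Integrable
        (fun u => (2 * s2)⁻¹ * (((u ^ 2 * p u) - (2 * m) * (u * p u)) + m ^ 2 * p u)) :=
      ib4.const_mul _
    have e2 : (fun u => p u * Real.log (gaussPdf m s2 u)) =
        fun u => (-(1/2) * Real.log (2 * Real.pi * s2)) * p u -
          (2 * s2)⁻¹ * (((u ^ 2 * p u) - (2 * m) * (u * p u)) + m ^ 2 * p u) := by
      funext u; rw [gaussPdf_log hs2]; ring
    rw [e2, integral_sub ia ib, integral_const_mul, integral_const_mul,
      integral_add ib2 ib3, integral_sub h2 ib1, integral_const_mul, integral_const_mul, hp.2]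
    ring
  -- algebraic identities
  have hls : lam * (2 * s2)⁻¹ = c := by
    rw [hs2def]; field_simp
  have hcm : c * m = -(a * A) := by
    rw [hmdef]; field_simp
  have h2ps : 2 * Real.pi * s2 = Real.pi * lam / c := by
    rw [hs2def]; field_simp
  have hlog1 : Real.log (2 * Real.pi * s2) = Real.log (Real.pi * lam) - Real.log c := by
    rw [h2ps, Real.log_div (by positivity) hc.ne']
  have hlog2 : Real.log (c / (Real.pi * lam)) = Real.log c - Real.log (Real.pi * lam) := by
    rw [Real.log_div hc.ne' (by positivity)]
  have hcm2 : c * m ^ 2 = a ^ 2 * A ^ 2 / c := by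
    rw [hmdef]; field_simp
  have hAc : A ^ 2 - a ^ 2 * A ^ 2 / c = σ ^ 2 / c * A ^ 2 := by
    rw [hcdef]; field_simp; ring
  -- combine
  unfold oneStepJ
  rw [houter]
  have hE : (∫ u, p u * Real.log (p u)) =
      (∫ u, p u * (Real.log (p u) - Real.log (gaussPdf m s2 u))) +
      (-(1/2) * Real.log (2 * Real.pi * s2) - (2 * s2)⁻¹ * (I2 - 2 * m * I1 + m ^ 2)) := by
    rw [hsplit, hlogqval]; ring
  rw [hE]
  rw [hlog1, hlog2]
  have expandmul : lam * ((2 * s2)⁻¹ * (I2 - 2 * m * I1 + m ^ 2)) =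
      c * I2 - 2 * (c * m) * I1 + (c * m ^ 2) := by
    have : lam * ((2 * s2)⁻¹ * (I2 - 2 * m * I1 + m ^ 2)) =
        (lam * (2 * s2)⁻¹) * (I2 - 2 * m * I1 + m ^ 2) := by ring
    rw [this, hls]; ring
  linear_combination (-1 : ℝ) * expandmul + 2 * I1 * hcm - hcm2 + hAc

theorem stmt4 {Ω : Type*} [MeasurableSpace Ω] (μ : Measure Ω) [IsProbabilityMeasure μ]
    (r : Ω → ℝ) (hmeas : Measurable r)
    (a σ rf lam x w b : ℝ) (hσ : 0 < σ) (hlam : 0 < lam) (hrf : 0 < rf)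
    (hr2 : Integrable (fun ω => (r ω) ^ 2) μ)
    (hra : ∫ ω, r ω ∂μ = a)
    (hrv : ∫ ω, (r ω) ^ 2 ∂μ = a ^ 2 + σ ^ 2) :
    -- the Gaussian N(-a(r_f x - w)/(a²+σ²), λ/(2(a²+σ²))) minimizes J
    (∀ p : ℝ → ℝ, IsDensity p →
      Integrable (fun u => u ^ 2 * p u) →
      Integrable (fun u => p u * Real.log (p u)) →
      oneStepJ μ r rf lam x w b
          (gaussPdf (-(a * (rf * x - w)) / (a ^ 2 + σ ^ 2)) (lam / (2 * (a ^ 2 + σ ^ 2)))) ≤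
        oneStepJ μ r rf lam x w b p) ∧
    -- and the minimum value is the claimed one
    oneStepJ μ r rf lam x w b
        (gaussPdf (-(a * (rf * x - w)) / (a ^ 2 + σ ^ 2)) (lam / (2 * (a ^ 2 + σ ^ 2)))) =
      σ ^ 2 / (a ^ 2 + σ ^ 2) * (rf * x - w) ^ 2 +
        lam / 2 * Real.log ((a ^ 2 + σ ^ 2) / (Real.pi * lam)) - (w - b) ^ 2 := by
  
  have hc : (0:ℝ) < a ^ 2 + σ ^ 2 := by positivity
  have hs2 : (0:ℝ) < lam / (2 * (a ^ 2 + σ ^ 2)) := by positivity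
  have hq : IsDensity (gaussPdf (-(a * (rf * x - w)) / (a ^ 2 + σ ^ 2))
      (lam / (2 * (a ^ 2 + σ ^ 2)))) :=
    ⟨fun u => (gaussPdf_pos hs2 u).le, gaussPdf_integral hs2⟩
  have hq2 := gaussPdf_sq_integrable (m := -(a * (rf * x - w)) / (a ^ 2 + σ ^ 2)) hs2
  have hqe := gaussPdf_entropy_integrable (m := -(a * (rf * x - w)) / (a ^ 2 + σ ^ 2)) hs2
  have hJq := J_formula μ r hmeas a σ rf lam x w b hσ hlam hr2 hra hrv _ hq hq2 hqe
  have hDq : ∫ u, gaussPdf (-(a * (rf * x - w)) / (a ^ 2 + σ ^ 2))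
      (lam / (2 * (a ^ 2 + σ ^ 2))) u *
      (Real.log (gaussPdf (-(a * (rf * x - w)) / (a ^ 2 + σ ^ 2))
        (lam / (2 * (a ^ 2 + σ ^ 2))) u) -
       Real.log (gaussPdf (-(a * (rf * x - w)) / (a ^ 2 + σ ^ 2))
        (lam / (2 * (a ^ 2 + σ ^ 2))) u)) = 0 := by
    simp
  constructor
  · intro p hp h2 hent
    have hJp := J_formula μ r hmeas a σ rf lam x w b hσ hlam hr2 hra hrv p hp h2 hent
    have hD := gibbs (m := -(a * (rf * x - w)) / (a ^ 2 + σ ^ 2)) hs2 hp hent h2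
    rw [hJp, hJq, hDq]
    have h0 : 0 ≤ lam * ∫ u, p u * (Real.log (p u) -
        Real.log (gaussPdf (-(a * (rf * x - w)) / (a ^ 2 + σ ^ 2))
          (lam / (2 * (a ^ 2 + σ ^ 2))) u)) := mul_nonneg hlam.le hD
    linarith
  · rw [hJq, hDq]; ring
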